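/- Let d ≥ 2 be an integer, L > 0, k a real constant, U ⊆ ℝ² open, and f, r : U → ℝ twice continuously differentiable with r > 0 on U. Suppose T₊₊, T₋₋, T₊₋ : U → ℝ satisfy the reduced Einstein equations: r·T±±/(d−1) = −(∂±f)(∂±r) − ∂±∂±r and r·T₊₋/(d−1) = ∂₊∂₋r + ((d−2)/r)[ (e^{−f}/2)(k + r²/L²) + (∂₊r)(∂₋r) ] + (r/L²)e^{−f}, with T₊₊ ≥ 0, T₋₋ ≥ 0, T₊₋ ≥ 0 on U. Define μ = k r^{d−2} + 2 e^{f} r^{d−2} (∂₊r)(∂₋r) + r^{d}/L². Let γ = (γ⁺, γ⁻) : [0,1] → U be continuously differentiable with (γ⁺)′ ≥ 0 and (γ⁻)′ ≤ 0, suppose ∂₊r ≥ 0 and ∂₋r ≤ 0 at every point γ(t), and suppose the initial point is marginally trapped: ∂₊r(γ(0)) = 0. Then, writing r₀ = r(γ(0)), one has μ(γ(1)) ≥ k r₀^{d−2} + r₀^{d}/L². -/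

import Mathlib

/-- Partial derivative in the `x⁺` (first coordinate) direction. -/
noncomputable def dplus (g : ℝ × ℝ → ℝ) (x : ℝ × ℝ) : ℝ := fderiv ℝ g x (1, 0)

/-- Partial derivative in the `x⁻` (second coordinate) direction. -/
noncomputable def dminus (g : ℝ × ℝ → ℝ) (x : ℝ × ℝ) : ℝ := fderiv ℝ g x (0, 1)

private lemma key_aux (e : ℕ) (L k : ℝ) (U : Set (ℝ × ℝ)) (hU : IsOpen U)
    (f r : ℝ × ℝ → ℝ) (hf : ContDiffOn ℝ 2 f U) (hr : ContDiffOn ℝ 2 r U)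
    (x : ℝ × ℝ) (hx : x ∈ U) :
    DifferentiableAt ℝ (fun y => k * r y ^ e + 2 * Real.exp (f y) * r y ^ e * dplus r y * dminus r y + r y ^ (e+2) / L ^ 2) x ∧
    ∀ v : ℝ × ℝ,
      fderiv ℝ (fun y => k * r y ^ e + 2 * Real.exp (f y) * r y ^ e * dplus r y * dminus r y + r y ^ (e+2) / L ^ 2) x v =
      k * ((e:ℝ) * r x ^ (e - 1) * fderiv ℝ r x v)
      + (2 * Real.exp (f x) * fderiv ℝ f x v * r x ^ e * dplus r x * dminus r x
         + 2 * Real.exp (f x) * ((e:ℝ) * r x ^ (e-1) * fderiv ℝ r x v) * dplus r x * dminus r x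
         + 2 * Real.exp (f x) * r x ^ e * (fderiv ℝ (dplus r) x v) * dminus r x
         + 2 * Real.exp (f x) * r x ^ e * dplus r x * (fderiv ℝ (dminus r) x v))
      + ((e:ℝ)+2) * r x ^ (e+1) * fderiv ℝ r x v / L ^ 2 := by
  simp only [div_eq_mul_inv]
  have hrA : ContDiffAt ℝ 2 r x := hr.contDiffAt (hU.mem_nhds hx)
  have hfA : ContDiffAt ℝ 2 f x := hf.contDiffAt (hU.mem_nhds hx)
  have hRd : HasFDerivAt r (fderiv ℝ r x) x := (hrA.differentiableAt (by norm_num)).hasFDerivAt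
  have hFd : HasFDerivAt f (fderiv ℝ f x) x := (hfA.differentiableAt (by norm_num)).hasFDerivAt
  have hp1 : ContDiffAt ℝ 1 (dplus r) x := (hrA.fderiv_right (by norm_num)).clm_apply contDiffAt_const
  have hm1 : ContDiffAt ℝ 1 (dminus r) x := (hrA.fderiv_right (by norm_num)).clm_apply contDiffAt_const
  have hPd : HasFDerivAt (dplus r) (fderiv ℝ (dplus r) x) x := (hp1.differentiableAt (by norm_num)).hasFDerivAt
  have hMd : HasFDerivAt (dminus r) (fderiv ℝ (dminus r) x) x := (hm1.differentiableAt (by norm_num)).hasFDerivAt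
  have hpow : HasFDerivAt (fun y => r y ^ e) (((e:ℝ) * r x ^ (e-1)) • fderiv ℝ r x) x :=
    (hasDerivAt_pow e (r x)).comp_hasFDerivAt x hRd
  have hpow2 : HasFDerivAt (fun y => r y ^ (e+2)) ((((e:ℝ)+2) * r x ^ (e+1)) • fderiv ℝ r x) x := by
    have h := (hasDerivAt_pow (e+2) (r x)).comp_hasFDerivAt x hRd
    convert h using 2 <;> push_cast <;> rfl
  have hexp : HasFDerivAt (fun y => Real.exp (f y)) (Real.exp (f x) • fderiv ℝ f x) x := hFd.exp
  have total := ((hpow.const_mul k).add ((((hexp.const_mul 2).mul hpow).mul hPd).mul hMd)).add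
    (hpow2.mul_const ((L^2)⁻¹))
  refine ⟨total.differentiableAt, fun v => ?_⟩
  rw [HasFDerivAt.fderiv (f := fun y => k * r y ^ e + 2 * Real.exp (f y) * r y ^ e * dplus r y * dminus r y + r y ^ (e + 2) * (L ^ 2)⁻¹) total]
  simp only [ContinuousLinearMap.add_apply, ContinuousLinearMap.coe_smul', Pi.smul_apply,
    smul_eq_mul, ContinuousLinearMap.smul_apply, ContinuousLinearMap.smulRight_apply,
    ContinuousLinearMap.coe_comp', Function.comp_apply, Pi.mul_apply]
  ring

lemma dplus_eq (g : ℝ × ℝ → ℝ) (x : ℝ × ℝ) : fderiv ℝ g x (1, 0) = dplus g x := rfl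
lemma dminus_eq (g : ℝ × ℝ → ℝ) (x : ℝ × ℝ) : fderiv ℝ g x (0, 1) = dminus g x := rfl

private lemma symm_aux (r : ℝ × ℝ → ℝ) (x : ℝ × ℝ) (hrA : ContDiffAt ℝ 2 r x) :
    dminus (dplus r) x = dplus (dminus r) x := by
  have hd : DifferentiableAt ℝ (fderiv ℝ r) x :=
    (hrA.fderiv_right (m := 1) (le_refl 2)).differentiableAt (by norm_num)
  have hsymm := hrA.isSymmSndFDerivAt (by simp [minSmoothness_of_isRCLikeNormedField])
  have h1 : ∀ v w : ℝ × ℝ, fderiv ℝ (fun y => fderiv ℝ r y w) x v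
      = fderiv ℝ (fderiv ℝ r) x v w := by
    intro v w
    have h := ((ContinuousLinearMap.apply ℝ ℝ w).hasFDerivAt.comp x hd.hasFDerivAt).fderiv
    calc fderiv ℝ (fun y => fderiv ℝ r y w) x v
        = fderiv ℝ ((ContinuousLinearMap.apply ℝ ℝ w) ∘ (fderiv ℝ r)) x v := rfl
      _ = ((ContinuousLinearMap.apply ℝ ℝ w).comp (fderiv ℝ (fderiv ℝ r) x)) v := by rw [h]
      _ = fderiv ℝ (fderiv ℝ r) x v w := rfl
  show fderiv ℝ (fun y => fderiv ℝ r y (1,0)) x (0,1) = fderiv ℝ (fun y => fderiv ℝ r y (0,1)) x (1,0)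
  rw [h1, h1]
  exact hsymm.eq _ _

private lemma alg_plus (e : ℕ) (L rx E k p m df dp dm Tpp Tpm : ℝ)
    (hrx : rx ≠ 0) (hL : L ≠ 0) (hE : E ≠ 0)
    (hdp : dp = -df * p - rx * Tpp / ((e:ℝ)+1))
    (hdm : dm = rx * Tpm / ((e:ℝ)+1)
      - ((e:ℝ) / rx) * (E⁻¹ / 2 * (k + rx ^ 2 / L ^ 2) + p * m) - (rx / L ^ 2) * E⁻¹) :
    k * ((e:ℝ) * rx ^ (e - 1) * p)
      + (2 * E * df * rx ^ e * p * m
         + 2 * E * ((e:ℝ) * rx ^ (e-1) * p) * p * m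
         + 2 * E * rx ^ e * dp * m
         + 2 * E * rx ^ e * p * dm)
      + ((e:ℝ)+2) * rx ^ (e+1) * p / L ^ 2
    = 2 / ((e:ℝ)+1) * E * rx ^ (e+1) * (p * Tpm - m * Tpp) := by
  have he1 : ((e:ℝ) + 1) ≠ 0 := by positivity
  have hp1 : (e:ℝ) * rx ^ (e-1) = (e:ℝ) * rx ^ e / rx := by
    cases e with
    | zero => simp
    | succ n =>
      field_simp
      rw [pow_succ]
      push_cast
      ring
  rw [hdp, hdm, hp1]
  field_simp
  ring

theorem mass_bound_from_marginally_trapped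
    (d : ℕ) (hd : 2 ≤ d) (L k : ℝ) (hL : 0 < L)
    (U : Set (ℝ × ℝ)) (hU : IsOpen U)
    (f r : ℝ × ℝ → ℝ)
    (hf : ContDiffOn ℝ 2 f U) (hr : ContDiffOn ℝ 2 r U)
    (hrpos : ∀ x ∈ U, 0 < r x)
    (Tpp Tmm Tpm : ℝ × ℝ → ℝ)
    (hEpp : ∀ x ∈ U, r x * Tpp x / ((d : ℝ) - 1) =
      -(dplus f x) * dplus r x - dplus (dplus r) x)
    (hEmm : ∀ x ∈ U, r x * Tmm x / ((d : ℝ) - 1) =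
      -(dminus f x) * dminus r x - dminus (dminus r) x)
    (hEpm : ∀ x ∈ U, r x * Tpm x / ((d : ℝ) - 1) =
      dplus (dminus r) x + (((d : ℝ) - 2) / r x) *
        (Real.exp (-(f x)) / 2 * (k + r x ^ 2 / L ^ 2) + dplus r x * dminus r x)
      + (r x / L ^ 2) * Real.exp (-(f x)))
    (hTppnn : ∀ x ∈ U, 0 ≤ Tpp x) (hTmmnn : ∀ x ∈ U, 0 ≤ Tmm x)
    (hTpmnn : ∀ x ∈ U, 0 ≤ Tpm x)
    (μ : ℝ × ℝ → ℝ)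
    (hμ : ∀ x, μ x = k * r x ^ (d - 2)
      + 2 * Real.exp (f x) * r x ^ (d - 2) * dplus r x * dminus r x
      + r x ^ d / L ^ 2)
    (γp γm : ℝ → ℝ)
    (hγmem : ∀ t ∈ Set.Icc (0 : ℝ) 1, (γp t, γm t) ∈ U)
    (hγC1 : ContDiffOn ℝ 1 (fun t => (γp t, γm t)) (Set.Icc (0 : ℝ) 1))
    (hγp' : ∀ t ∈ Set.Icc (0 : ℝ) 1, 0 ≤ derivWithin γp (Set.Icc (0 : ℝ) 1) t)
    (hγm' : ∀ t ∈ Set.Icc (0 : ℝ) 1, derivWithin γm (Set.Icc (0 : ℝ) 1) t ≤ 0)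
    (huntrapped : ∀ t ∈ Set.Icc (0 : ℝ) 1,
      0 ≤ dplus r (γp t, γm t) ∧ dminus r (γp t, γm t) ≤ 0)
    (hmarg : dplus r (γp 0, γm 0) = 0) :
    μ (γp 1, γm 1) ≥ k * r (γp 0, γm 0) ^ (d - 2) + r (γp 0, γm 0) ^ d / L ^ 2 := by
  obtain ⟨e, rfl⟩ : ∃ e, d = 2 + e := ⟨d - 2, by omega⟩
  have hd2 : 2 + e - 2 = e := by omega
  have hd2' : 2 + e = e + 2 := by omega
  rw [hd2, hd2'] at hμ ⊢
  have hμfun : μ = fun y => k * r y ^ e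
      + 2 * Real.exp (f y) * r y ^ e * dplus r y * dminus r y + r y ^ (e+2) / L ^ 2 :=
    funext hμ
  have hLne : L ≠ 0 := ne_of_gt hL
  -- signs of the partial derivatives of μ on U, at untrapped points
  have hsigns : ∀ x ∈ U, 0 ≤ dplus r x → dminus r x ≤ 0 →
      0 ≤ fderiv ℝ μ x (1, 0) ∧ fderiv ℝ μ x (0, 1) ≤ 0 := by
    intro x hx hp hm
    have hrx : r x ≠ 0 := ne_of_gt (hrpos x hx)
    have hE : Real.exp (f x) ≠ 0 := Real.exp_ne_zero _
    have key := key_aux e L k U hU f r hf hr x hx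
    have hcast : ((2 + e : ℕ) : ℝ) = (e : ℝ) + 2 := by push_cast; ring
    have hpp := hEpp x hx
    have hmm := hEmm x hx
    have hpm := hEpm x hx
    rw [hcast] at hpp hmm hpm
    rw [Real.exp_neg] at hpm
    -- solved forms of the field equations
    have hdp : dplus (dplus r) x = -(dplus f x) * dplus r x - r x * Tpp x / ((e:ℝ)+1) := by
      linear_combination hpp
    have hdmm : dminus (dminus r) x = -(dminus f x) * dminus r x - r x * Tmm x / ((e:ℝ)+1) := by
      linear_combination hmm
    have hdm : dplus (dminus r) x = r x * Tpm x / ((e:ℝ)+1)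
        - ((e:ℝ) / r x) * ((Real.exp (f x))⁻¹ / 2 * (k + r x ^ 2 / L ^ 2) + dplus r x * dminus r x)
        - (r x / L ^ 2) * (Real.exp (f x))⁻¹ := by
      linear_combination -hpm
    have hdm' : dplus (dminus r) x = r x * Tpm x / ((e:ℝ)+1)
        - ((e:ℝ) / r x) * ((Real.exp (f x))⁻¹ / 2 * (k + r x ^ 2 / L ^ 2) + dminus r x * dplus r x)
        - (r x / L ^ 2) * (Real.exp (f x))⁻¹ := by
      linear_combination -hpm
    have hsy : dminus (dplus r) x = dplus (dminus r) x :=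
      symm_aux r x (hr.contDiffAt (hU.mem_nhds hx))
    have hc : (0:ℝ) ≤ 2 / ((e:ℝ)+1) * Real.exp (f x) * r x ^ (e+1) :=
      mul_nonneg (mul_nonneg (by positivity) (Real.exp_pos _).le)
        (pow_nonneg (hrpos x hx).le _)
    constructor
    · have h1 : fderiv ℝ μ x (1, 0)
          = 2 / ((e:ℝ)+1) * Real.exp (f x) * r x ^ (e+1)
            * (dplus r x * Tpm x - dminus r x * Tpp x) := by
        rw [hμfun]
        rw [(key.2 (1, 0) : _)]
        simp only [dplus_eq, dminus_eq]
        exact alg_plus e L (r x) (Real.exp (f x)) k (dplus r x) (dminus r x)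
          (dplus f x) (dplus (dplus r) x) (dplus (dminus r) x) (Tpp x) (Tpm x)
          hrx hLne hE hdp hdm
      rw [h1]
      have hsub : 0 ≤ dplus r x * Tpm x - dminus r x * Tpp x := by
        nlinarith [mul_nonneg hp (hTpmnn x hx), mul_nonneg (neg_nonneg.mpr hm) (hTppnn x hx)]
      exact mul_nonneg hc hsub
    · have h1 : fderiv ℝ μ x (0, 1)
          = 2 / ((e:ℝ)+1) * Real.exp (f x) * r x ^ (e+1)
            * (dminus r x * Tpm x - dplus r x * Tmm x) := by
        rw [hμfun]
        rw [(key.2 (0, 1) : _)]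
        simp only [dplus_eq, dminus_eq]
        rw [hsy]
        have halg := alg_plus e L (r x) (Real.exp (f x)) k (dminus r x) (dplus r x)
          (dminus f x) (dminus (dminus r) x) (dplus (dminus r) x) (Tmm x) (Tpm x)
          hrx hLne hE hdmm hdm'
        linear_combination halg
      rw [h1]
      have hsub : dminus r x * Tpm x - dplus r x * Tmm x ≤ 0 := by
        nlinarith [mul_nonneg hp (hTmmnn x hx), mul_nonneg (neg_nonneg.mpr hm) (hTpmnn x hx)]
      exact mul_nonpos_iff.mpr (Or.inl ⟨hc, hsub⟩)
  -- μ is differentiable on U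
  have hμdiff : ∀ x ∈ U, DifferentiableAt ℝ μ x := by
    intro x hx
    rw [hμfun]
    exact (key_aux e L k U hU f r hf hr x hx).1
  -- the curve
  set γ : ℝ → ℝ × ℝ := fun t => (γp t, γm t) with hγdef
  set I : Set ℝ := Set.Icc (0:ℝ) 1 with hIdef
  set φ : ℝ → ℝ := fun t => μ (γ t) with hφdef
  have hφcont : ContinuousOn φ I := by
    apply ContinuousOn.comp (fun x hx => (hμdiff x hx).continuousAt.continuousWithinAt)
      (hγC1.continuousOn) (fun t ht => hγmem t ht)
  have hderiv : ∀ t ∈ interior I, HasDerivAt φ (deriv φ t) t ∧ 0 ≤ deriv φ t := by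
    intro t ht
    rw [hIdef, interior_Icc] at ht
    have ht' : t ∈ I := Set.Ioo_subset_Icc_self ht
    have hmemn : I ∈ nhds t := Icc_mem_nhds ht.1 ht.2
    have hγdA : DifferentiableAt ℝ γ t :=
      ((hγC1.differentiableOn (by norm_num)) t ht').differentiableAt hmemn
    have hγdd : HasDerivAt γ (deriv γ t) t := hγdA.hasDerivAt
    set V : ℝ × ℝ := deriv γ t with hV
    have hγpD : HasDerivAt γp V.1 t :=
      (ContinuousLinearMap.fst ℝ ℝ ℝ).hasFDerivAt.comp_hasDerivAt t hγdd
    have hγmD : HasDerivAt γm V.2 t :=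
      (ContinuousLinearMap.snd ℝ ℝ ℝ).hasFDerivAt.comp_hasDerivAt t hγdd
    have hV1 : 0 ≤ V.1 := by
      have := hγp' t ht'
      rwa [derivWithin_of_mem_nhds hmemn, hγpD.deriv] at this
    have hV2 : V.2 ≤ 0 := by
      have := hγm' t ht'
      rwa [derivWithin_of_mem_nhds hmemn, hγmD.deriv] at this
    have hμF : HasFDerivAt μ (fderiv ℝ μ (γ t)) (γ t) :=
      (hμdiff (γ t) (hγmem t ht')).hasFDerivAt
    have hφD : HasDerivAt φ (fderiv ℝ μ (γ t) V) t := hμF.comp_hasDerivAt t hγdd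
    have hVsplit : V = V.1 • ((1:ℝ), (0:ℝ)) + V.2 • ((0:ℝ), (1:ℝ)) := by
      ext <;> simp
    have hval : fderiv ℝ μ (γ t) V
        = V.1 * fderiv ℝ μ (γ t) (1, 0) + V.2 * fderiv ℝ μ (γ t) (0, 1) := by
      conv_lhs => rw [hVsplit]
      rw [map_add, map_smul, map_smul]
      simp [smul_eq_mul]
    have hsg := hsigns (γ t) (hγmem t ht') (huntrapped t ht').1 (huntrapped t ht').2
    have hnn : 0 ≤ fderiv ℝ μ (γ t) V := by
      rw [hval]
      have a1 : 0 ≤ V.1 * fderiv ℝ μ (γ t) (1, 0) := mul_nonneg hV1 hsg.1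
      have a2 : 0 ≤ V.2 * fderiv ℝ μ (γ t) (0, 1) := mul_nonneg_iff.mpr (Or.inr ⟨hV2, hsg.2⟩)
      linarith
    rw [hφD.deriv]
    exact ⟨hφD, hnn⟩
  have hφdiff : DifferentiableOn ℝ φ (interior I) :=
    fun t ht => ((hderiv t ht).1.differentiableAt).differentiableWithinAt
  have hmono : MonotoneOn φ I :=
    monotoneOn_of_deriv_nonneg (convex_Icc 0 1) hφcont hφdiff (fun t ht => (hderiv t ht).2)
  have h01 : φ 0 ≤ φ 1 :=
    hmono (Set.mem_Icc.mpr ⟨le_refl 0, zero_le_one⟩) (Set.mem_Icc.mpr ⟨zero_le_one, le_refl 1⟩)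
      zero_le_one
  have hφ0 : φ 0 = k * r (γp 0, γm 0) ^ e + r (γp 0, γm 0) ^ (e + 2) / L ^ 2 := by
    rw [hφdef]
    simp only [hγdef]
    rw [hμ (γp 0, γm 0), hmarg]
    ring
  calc μ (γp 1, γm 1) = φ 1 := rfl
    _ ≥ φ 0 := h01
    _ = _ := by rw [hφ0]
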